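/- Let $L > 0$, set $h(L) = \arccos(\tanh(L/2))$ and $s(L) = 2\pi h(L)/L$. Let $f$ be a holomorphic function on the disk $\{z \in \mathbb{C} : |z| < e^{s(L)}\}$ with $f(0) = 0$, and let $1 \leq c \leq e^{s(L)}$, with $c$ in the domain where $f$ is defined up to its boundary circle (i.e. $c < e^{s(L)}$, or $f$ extends continuously to $|z| = c$). Then for every $z$ with $e^{-s(L)} < |z| \leq c$, one has $|f(z)|\,\cos^2\!\Big(\frac{L}{2\pi}\log|z|\Big) \leq \Big(\sup_{|w| = c} |f(w)|\Big)\,\cos^2\!\Big(\frac{L}{2\pi}\log c\Big)$. -/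

import Mathlib

open Real

/-- Half the angular width of the standard collar of a geodesic of length `L`. -/
noncomputable def hh (L : ℝ) : ℝ := Real.arccos (Real.tanh (L / 2))

/-- The collar of a geodesic of length `L` is the annulus `e^{-s(L)} < |z| < e^{s(L)}`. -/
noncomputable def ss (L : ℝ) : ℝ := 2 * π * hh L / L



lemma tanh_pos' {L : ℝ} (hL : 0 < L) : 0 < Real.tanh (L / 2) := by
  rw [Real.tanh_eq_sinh_div_cosh]
  exact div_pos (Real.sinh_pos_iff.mpr (by linarith)) (Real.cosh_pos _)

lemma tanh_le_one' {L : ℝ} (hL : 0 < L) : Real.tanh (L / 2) ≤ 1 := by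
  rw [Real.tanh_eq_sinh_div_cosh, div_le_one (Real.cosh_pos _)]
  nlinarith [Real.cosh_sub_sinh (L/2), Real.exp_pos (-(L/2))]

lemma hh_lt_pi_div_two {L : ℝ} (hL : 0 < L) : hh L < π / 2 :=
  Real.arccos_lt_pi_div_two.mpr (tanh_pos' hL)

lemma hh_nonneg (L : ℝ) : 0 ≤ hh L := Real.arccos_nonneg _

lemma cos_hh_pos {L : ℝ} (hL : 0 < L) : 0 < Real.cos (hh L) := by
  rw [hh, Real.cos_arccos (by linarith [tanh_pos' hL]) (tanh_le_one' hL)]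
  exact tanh_pos' hL

lemma tan_hh_le {L : ℝ} (hL : 0 < L) : 2 * Real.sin (hh L) ≤ 2 * π / L * Real.cos (hh L) := by
  have h2 : (0:ℝ) < L / 2 := by linarith
  have hcosh := Real.cosh_pos (L / 2)
  have hsinh := Real.sinh_pos_iff.mpr h2
  have htanh : Real.tanh (L / 2) = Real.sinh (L/2) / Real.cosh (L/2) :=
    Real.tanh_eq_sinh_div_cosh _
  have hcos : Real.cos (hh L) = Real.tanh (L / 2) :=
    Real.cos_arccos (by linarith [tanh_pos' hL]) (tanh_le_one' hL)
  have hsin : Real.sin (hh L) = Real.sqrt (1 - Real.tanh (L/2) ^ 2) := Real.sin_arccos _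
  have hsq : 1 - Real.tanh (L/2) ^ 2 = (1 / Real.cosh (L/2)) ^ 2 := by
    rw [htanh]
    have h := Real.cosh_sq_sub_sinh_sq (L/2)
    field_simp
    exact h
  have hsin' : Real.sin (hh L) = 1 / Real.cosh (L/2) := by
    rw [hsin, hsq, Real.sqrt_sq (by positivity)]
  rw [hsin', hcos, htanh]
  have key : 2 * L ≤ 2 * π * Real.sinh (L / 2) := by
    nlinarith [Real.self_lt_sinh_iff.mpr h2, Real.pi_gt_three]
  have hrhs : 2 * π / L * (Real.sinh (L/2) / Real.cosh (L/2))
      = (2 * π * Real.sinh (L/2)) / (L * Real.cosh (L/2)) := by ring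
  rw [mul_one_div, hrhs, div_le_div_iff₀ hcosh (by positivity)]
  nlinarith [mul_pos hcosh hcosh]

lemma phi_mono {L : ℝ} (hL : 0 < L) :
    MonotoneOn (fun t => Real.exp (2 * π / L * t) * Real.cos t ^ 2)
      (Set.Icc (-(hh L)) (hh L)) := by
  have hπ : (0:ℝ) < π := Real.pi_pos
  have hderiv : ∀ t : ℝ, HasDerivAt (fun t => Real.exp (2 * π / L * t) * Real.cos t ^ 2)
      (Real.exp (2 * π / L * t) * (2 * π / L) * Real.cos t ^ 2
        + Real.exp (2 * π / L * t) * (2 * Real.cos t ^ 1 * (-Real.sin t))) t := by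
    intro t
    have h1 : HasDerivAt (fun t:ℝ => 2 * π / L * t) (2 * π / L) t := by
      simpa using (hasDerivAt_id t).const_mul (2 * π / L)
    have h2 : HasDerivAt (fun t:ℝ => Real.exp (2 * π / L * t))
        (Real.exp (2 * π / L * t) * (2 * π / L)) t := (Real.hasDerivAt_exp _).comp t h1
    have h3 : HasDerivAt (fun t:ℝ => Real.cos t ^ 2)
        (2 * Real.cos t ^ 1 * (-Real.sin t)) t := (Real.hasDerivAt_cos t).pow 2
    exact h2.mul h3
  apply monotoneOn_of_deriv_nonneg (convex_Icc _ _)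
  · exact Continuous.continuousOn (by continuity)
  · intro x hx
    exact (hderiv x).differentiableAt.differentiableWithinAt
  · intro x hx
    rw [interior_Icc] at hx
    rw [(hderiv x).deriv]
    have hhl2 := hh_lt_pi_div_two hL
    have hhnn := hh_nonneg L
    have hcx : 0 < Real.cos x :=
      Real.cos_pos_of_mem_Ioo ⟨by linarith [hx.1], by linarith [hx.2]⟩
    have hch' := cos_hh_pos hL
    have hkey : Real.sin x * Real.cos (hh L) ≤ Real.sin (hh L) * Real.cos x := by
      have : Real.sin (x - hh L) ≤ 0 := by
        apply Real.sin_nonpos_of_nonpos_of_neg_pi_le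
        · linarith [hx.2]
        · linarith [hx.1]
      rw [Real.sin_sub] at this
      linarith
    have htan := tan_hh_le hL
    have h1 : 2 * Real.sin x ≤ 2 * π / L * Real.cos x := by
      nlinarith [mul_le_mul_of_nonneg_right htan hcx.le]
    have hexp : 0 < Real.exp (2 * π / L * x) := Real.exp_pos _
    have hF : 2 * Real.sin x * Real.cos x ≤ 2 * π / L * Real.cos x ^ 2 := by
      nlinarith [mul_le_mul_of_nonneg_right h1 hcx.le]
    simp only [pow_one]
    nlinarith [mul_le_mul_of_nonneg_left hF hexp.le, sq_nonneg (Real.cos x)]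


/-- The positive Laurent part attains its maximal pointwise norm on the boundary:
if `f` is holomorphic on `{|z| < e^{s(L)}}` with `f 0 = 0` and continuous up to
`|z| = c` with `1 ≤ c ≤ e^{s(L)}`, then for `e^{-s(L)} < |z| ≤ c`,
`|f z| cos²((L/2π) log|z|) ≤ (sup_{|w|=c} |f w|) cos²((L/2π) log c)`. -/
theorem collar_max_principle_bound
    (L : ℝ) (hL : 0 < L) (f : ℂ → ℂ)
    (hf : DifferentiableOn ℂ f (Metric.ball (0 : ℂ) (Real.exp (ss L))))
    (hf0 : f 0 = 0)
    (c : ℝ) (hc1 : 1 ≤ c) (hc2 : c ≤ Real.exp (ss L))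
    (hfc : ContinuousOn f (Metric.closedBall (0 : ℂ) c))
    (z : ℂ) (hz1 : Real.exp (-(ss L)) < ‖z‖) (hz2 : ‖z‖ ≤ c) :
    ‖f z‖ * Real.cos (L / (2 * π) * Real.log (‖z‖)) ^ 2
      ≤ sSup ((fun w => ‖f w‖) '' Metric.sphere (0 : ℂ) c)
        * Real.cos (L / (2 * π) * Real.log c) ^ 2 := by
  have hπ : (0:ℝ) < π := Real.pi_pos
  have hc0 : (0:ℝ) < c := lt_of_lt_of_le one_pos hc1
  have hexp0 : (0:ℝ) < Real.exp (ss L) := Real.exp_pos _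
  set M := sSup ((fun w => ‖f w‖) '' Metric.sphere (0 : ℂ) c) with hM
  have hsph : (Metric.sphere (0:ℂ) c).Nonempty := NormedSpace.sphere_nonempty.mpr hc0.le
  have hcont_abs : ContinuousOn (fun w => ‖f w‖) (Metric.sphere (0:ℂ) c) :=
    continuous_norm.comp_continuousOn (hfc.mono Metric.sphere_subset_closedBall)
  have hbdd : BddAbove ((fun w => ‖f w‖) '' Metric.sphere (0:ℂ) c) :=
    ((isCompact_sphere (0:ℂ) c).image_of_continuousOn hcont_abs).bddAbove
  have hMmem : ∀ w ∈ Metric.sphere (0:ℂ) c, ‖f w‖ ≤ M :=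
    fun w hw => le_csSup hbdd ⟨w, hw, rfl⟩
  have hM0 : 0 ≤ M := by
    obtain ⟨w, hw⟩ := hsph
    exact le_trans (norm_nonneg _) (hMmem w hw)
  -- the quotient function
  set g := dslope f 0 with hg
  have hgeq : ∀ u : ℂ, u ≠ 0 → g u = f u / u := by
    intro u hu
    rw [hg, dslope_of_ne _ hu, slope_def_field, hf0, sub_zero, sub_zero]
  have hgd : DifferentiableOn ℂ g (Metric.ball (0:ℂ) (Real.exp (ss L))) :=
    (Complex.differentiableOn_dslope (Metric.ball_mem_nhds _ hexp0)).mpr hf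
  have hball_sub : Metric.ball (0:ℂ) c ⊆ Metric.ball (0:ℂ) (Real.exp (ss L)) :=
    Metric.ball_subset_ball hc2
  have hgc : ContinuousOn g (Metric.closedBall (0:ℂ) c) := by
    intro w hw
    by_cases hw0 : w = 0
    · subst hw0
      exact ((hgd.differentiableAt
        (Metric.isOpen_ball.mem_nhds (Metric.mem_ball_self hexp0))).continuousAt).continuousWithinAt
    · have hev : g =ᶠ[nhds w] (fun u => f u / u) := by
        filter_upwards [isOpen_ne.mem_nhds hw0] with u hu using hgeq u hu
      have hcw : ContinuousWithinAt (fun u => f u / u) (Metric.closedBall (0:ℂ) c) w :=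
        (hfc w hw).div continuousWithinAt_id hw0
      exact hcw.congr_of_eventuallyEq (hev.filter_mono nhdsWithin_le_nhds) (hgeq w hw0)
  have hgD : DiffContOnCl ℂ g (Metric.ball (0:ℂ) c) :=
    ⟨hgd.mono hball_sub, by rwa [closure_ball (0:ℂ) hc0.ne']⟩
  have hgle : ∀ u ∈ frontier (Metric.ball (0:ℂ) c), ‖g u‖ ≤ M / c := by
    rw [frontier_ball (0:ℂ) hc0.ne']
    intro u hu
    have huc : ‖u‖ = c := mem_sphere_zero_iff_norm.mp hu
    have hu0 : u ≠ 0 := by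
      intro h; rw [h, norm_zero] at huc; exact hc0.ne huc
    rw [hgeq u hu0, norm_div, huc]
    have : ‖f u‖ / c ≤ M / c :=
      div_le_div_of_nonneg_right (hMmem u hu) hc0.le
    exact this
  have hzc : z ∈ closure (Metric.ball (0:ℂ) c) := by
    rw [closure_ball (0:ℂ) hc0.ne']
    exact mem_closedBall_zero_iff.mpr hz2
  have hgz : ‖g z‖ ≤ M / c :=
    Complex.norm_le_of_forall_mem_frontier_norm_le Metric.isBounded_ball hgD hgle hzc
  have hr0 : 0 < ‖z‖ := lt_trans (Real.exp_pos _) hz1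
  have hz0 : z ≠ 0 := by
    intro h; rw [h] at hr0; simp at hr0
  have hfzb : ‖f z‖ ≤ ‖z‖ * (M / c) := by
    rw [hgeq z hz0, norm_div] at hgz
    rw [div_le_iff₀ (by simpa using hr0)] at hgz
    calc ‖f z‖ = ‖f z‖ := rfl
      _ ≤ M / c * ‖z‖ := hgz
      _ = ‖z‖ * (M / c) := by ring
  -- monotonicity
  set r := ‖z‖ with hr
  set t1 := L / (2 * π) * Real.log r with ht1
  set t2 := L / (2 * π) * Real.log c with ht2
  have hssL : L / (2 * π) * ss L = hh L := by
    unfold ss; field_simp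
  have ha0 : 0 < L / (2 * π) := by positivity
  have hlogr1 : -(ss L) < Real.log r := (Real.lt_log_iff_exp_lt hr0).mpr hz1
  have hlogc2 : Real.log c ≤ ss L := (Real.log_le_iff_le_exp hc0).mpr hc2
  have hlogrc : Real.log r ≤ Real.log c := Real.log_le_log hr0 hz2
  have hlogc0 : 0 ≤ Real.log c := Real.log_nonneg hc1
  have ht1mem : t1 ∈ Set.Icc (-(hh L)) (hh L) := by
    constructor
    · rw [← hssL]
      nlinarith
    · rw [← hssL]
      nlinarith
  have ht2mem : t2 ∈ Set.Icc (-(hh L)) (hh L) := by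
    constructor
    · exact le_trans (neg_nonpos.mpr (hh_nonneg L)) (mul_nonneg ha0.le hlogc0)
    · rw [← hssL]; nlinarith
  have ht12 : t1 ≤ t2 := by
    rw [ht1, ht2]
    exact mul_le_mul_of_nonneg_left hlogrc ha0.le
  have hphi := phi_mono hL ht1mem ht2mem ht12
  have hsimp : ∀ x : ℝ, 2 * π / L * (L / (2 * π) * x) = x := by
    intro x; field_simp
  simp only [ht1, ht2, hsimp] at hphi
  rw [Real.exp_log hr0, Real.exp_log hc0] at hphi
  -- combine
  calc ‖f z‖ * Real.cos t1 ^ 2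
      ≤ (r * (M / c)) * Real.cos t1 ^ 2 :=
        mul_le_mul_of_nonneg_right hfzb (sq_nonneg _)
    _ = (M / c) * (r * Real.cos t1 ^ 2) := by ring
    _ ≤ (M / c) * (c * Real.cos t2 ^ 2) :=
        mul_le_mul_of_nonneg_left hphi (by positivity)
    _ = M * Real.cos t2 ^ 2 := by field_simp
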